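/- If w ∈ ι(θ) is a twisted identity satisfying s·w·θ(s) = w for all s in the support J(w) of w (equivalently, w equals the longest element of the finite parabolic subgroup W_{J(w)}), then w = e. -/

import Mathlib

open Equiv Finset
open scoped Classical

namespace TwistedAux

variable {B W : Type*} [Group W] {M : CoxeterMatrix B} (cs : CoxeterSystem M W)

private noncomputable def etaFun (i : B) : W × ZMod 2 → W × ZMod 2 :=
  fun p => (cs.simple i * p.1 * cs.simple i, p.2 + if p.1 = cs.simple i then 1 else 0)

private lemma simple_conj_eq_iff (i : B) (t : W) :
    cs.simple i * t * cs.simple i = cs.simple i ↔ t = cs.simple i := by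
  constructor
  · intro h
    have := congrArg (fun z => cs.simple i * z * cs.simple i) h
    simpa [mul_assoc, cs.simple_mul_simple_cancel_left, cs.simple_mul_simple_cancel_right,
      cs.simple_mul_simple_self] using this
  · rintro rfl
    simp [mul_assoc, cs.simple_mul_simple_self]

private lemma etaFun_invol (i : B) : Function.Involutive (etaFun cs i) := by
  rintro ⟨t, ε⟩
  unfold etaFun
  simp only [Prod.mk.injEq]
  refine ⟨by simp [mul_assoc, cs.simple_mul_simple_cancel_left,
    cs.simple_mul_simple_cancel_right], ?_⟩
  rw [simple_conj_eq_iff]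
  split_ifs with h
  · rw [add_assoc, show (1:ZMod 2)+1 = 0 by decide, add_zero]
  · simp

noncomputable def eta (i : B) : Equiv.Perm (W × ZMod 2) := (etaFun_invol cs i).toPerm

lemma eta_apply (i : B) (t : W) (ε : ZMod 2) :
    eta cs i (t, ε) = (cs.simple i * t * cs.simple i, ε + if t = cs.simple i then 1 else 0) :=
  rfl

end TwistedAux

namespace TwistedAux

variable {B W : Type*} [Group W] {M : CoxeterMatrix B} (cs : CoxeterSystem M W)

private lemma conj_eq_iff (a t u : W) : a * t * a⁻¹ = u ↔ t = a⁻¹ * u * a := by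
  constructor
  · intro h; rw [← h]; group
  · intro h; rw [h]; group

lemma eta_apply' (i : B) (t : W) (ε : ZMod 2) :
    eta cs i (t, ε) =
      (cs.simple i * t * (cs.simple i)⁻¹, ε + if t = cs.simple i then 1 else 0) := by
  rw [eta_apply, cs.inv_simple]

lemma eta_mul_pow_apply (i j : B) (k : ℕ) (t : W) (ε : ZMod 2) :
    ((eta cs i * eta cs j) ^ k) (t, ε) =
      ((cs.simple i * cs.simple j) ^ k * t * ((cs.simple i * cs.simple j) ^ k)⁻¹,
        ε + ∑ r ∈ Finset.range (2 * k),
          (if t = cs.simple i * (cs.simple i * cs.simple j) ^ (r + 1) then (1 : ZMod 2) else 0)) := by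
  set p := cs.simple i * cs.simple j with hpdef
  have h1 : p⁻¹ * cs.simple i = cs.simple i * p := by
    rw [hpdef, mul_inv_rev, cs.inv_simple, cs.inv_simple, mul_assoc, cs.simple_mul_simple_self,
      mul_one, cs.simple_mul_simple_cancel_left]
  have hshift : ∀ r : ℕ, p⁻¹ * (cs.simple i * p ^ (r + 1)) * p = cs.simple i * p ^ (r + 3) := by
    intro r
    rw [← mul_assoc p⁻¹ (cs.simple i) (p ^ (r + 1)), h1,
      mul_assoc (cs.simple i) p (p ^ (r + 1)), ← pow_succ', mul_assoc, ← pow_succ]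
  induction k generalizing t ε with
  | zero => simp
  | succ k ih =>
    rw [pow_succ, Perm.mul_apply, Perm.mul_apply, eta_apply' cs j, eta_apply' cs i, ih]
    have hfirst : p ^ k * (cs.simple i * (cs.simple j * t * (cs.simple j)⁻¹) * (cs.simple i)⁻¹)
        * (p ^ k)⁻¹ = p ^ (k + 1) * t * (p ^ (k + 1))⁻¹ := by
      have hmid : cs.simple i * (cs.simple j * t * (cs.simple j)⁻¹) * (cs.simple i)⁻¹
          = p * t * p⁻¹ := by rw [hpdef, mul_inv_rev]; group
      have habs : ∀ (q u : W) (n : ℕ),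
          q ^ n * (q * u * q⁻¹) * (q ^ n)⁻¹ = q ^ (n + 1) * u * (q ^ (n + 1))⁻¹ := by
        intro q u n
        rw [pow_succ, mul_inv_rev]
        simp only [mul_assoc]
      rw [hmid]
      exact habs p t k
    have hc0 : cs.simple i * p ^ (0 + 1) = cs.simple j := by
      rw [zero_add, pow_one, hpdef, cs.simple_mul_simple_cancel_left]
    have hc1 : ((cs.simple j * t * (cs.simple j)⁻¹ = cs.simple i)) ↔
        (t = cs.simple i * p ^ (1 + 1)) := by
      rw [conj_eq_iff]
      have : (cs.simple j)⁻¹ * cs.simple i * cs.simple j = cs.simple i * p ^ (1 + 1) := by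
        rw [cs.inv_simple, hpdef]
        rw [pow_two]
        rw [show cs.simple i * (cs.simple i * cs.simple j * (cs.simple i * cs.simple j)) =
          cs.simple i * (cs.simple i * (cs.simple j * (cs.simple i * cs.simple j))) by group]
        rw [cs.simple_mul_simple_cancel_left, mul_assoc]
      rw [this]
    have hcr : ∀ r : ℕ,
        ((cs.simple i * (cs.simple j * t * (cs.simple j)⁻¹) * (cs.simple i)⁻¹
            = cs.simple i * p ^ (r + 1))) ↔ (t = cs.simple i * p ^ (r + 3)) := by
      intro r
      have hconj : cs.simple i * (cs.simple j * t * (cs.simple j)⁻¹) * (cs.simple i)⁻¹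
          = p * t * p⁻¹ := by rw [hpdef]; group
      rw [hconj, conj_eq_iff, hshift r]
    rw [Prod.mk.injEq]
    refine ⟨hfirst, ?_⟩
    have hsplit : ∑ r ∈ Finset.range (2 * (k + 1)),
        (if t = cs.simple i * p ^ (r + 1) then (1 : ZMod 2) else 0)
        = (∑ r ∈ Finset.range (2 * k),
            (if t = cs.simple i * p ^ (r + 3) then (1 : ZMod 2) else 0))
          + (if t = cs.simple i * p ^ (1 + 1) then (1 : ZMod 2) else 0)
          + (if t = cs.simple i * p ^ (0 + 1) then (1 : ZMod 2) else 0) := by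
      rw [show 2 * (k + 1) = (2 * k + 1) + 1 by ring]
      rw [Finset.sum_range_succ' _ (2 * k + 1), Finset.sum_range_succ' _ (2 * k)]
    rw [hsplit, hc0]
    simp only [hc1, hcr]
    abel

lemma eta_liftable : M.IsLiftable (fun i => eta cs i) := by
  intro i j
  apply Equiv.ext
  rintro ⟨t, ε⟩
  rw [Perm.one_apply]
  rw [eta_mul_pow_apply cs i j (M i j) t ε]
  rw [cs.simple_mul_simple_pow i j]
  rw [Prod.mk.injEq]
  refine ⟨by simp, ?_⟩
  rw [two_mul, Finset.sum_range_add]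
  have hper : (∑ r ∈ Finset.range (M i j),
      (if t = cs.simple i * (cs.simple i * cs.simple j) ^ (M i j + r + 1) then (1 : ZMod 2)
        else 0))
      = ∑ r ∈ Finset.range (M i j),
      (if t = cs.simple i * (cs.simple i * cs.simple j) ^ (r + 1) then (1 : ZMod 2) else 0) := by
    refine Finset.sum_congr rfl (fun r _ => ?_)
    have : (cs.simple i * cs.simple j) ^ (M i j + r + 1)
        = (cs.simple i * cs.simple j) ^ (r + 1) := by
      rw [show M.M i j + r + 1 = (M.M i j) + (r + 1) by ring, pow_add,
        cs.simple_mul_simple_pow i j, one_mul]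
    rw [this]
  rw [hper, CharTwo.add_self_eq_zero, add_zero]

noncomputable def PHI : W →* Equiv.Perm (W × ZMod 2) :=
  cs.lift ⟨fun i => eta cs i, eta_liftable cs⟩

lemma PHI_simple (i : B) : PHI cs (cs.simple i) = eta cs i :=
  cs.lift_apply_simple (eta_liftable cs) i

/-- The reflection cocycle (mod 2). -/
noncomputable def phi (w t : W) : ZMod 2 := ((PHI cs) w (t, 0)).2

lemma PHI_apply (w : W) : ∀ (t : W) (ε : ZMod 2),
    PHI cs w (t, ε) = (w * t * w⁻¹, ε + phi cs w t) := by
  induction w using cs.simple_induction_left with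
  | one =>
    intro t ε
    simp [phi, map_one]
  | mul_simple_left w i ih =>
    intro t ε
    have hm : PHI cs (cs.simple i * w) = eta cs i * PHI cs w := by
      rw [map_mul, PHI_simple]
    rw [hm, Perm.mul_apply, ih t ε, eta_apply']
    have h2 : phi cs (cs.simple i * w) t
        = phi cs w t + (if w * t * w⁻¹ = cs.simple i then 1 else 0) := by
      unfold phi
      rw [hm, Perm.mul_apply, ih t 0, eta_apply', zero_add]
    rw [h2, Prod.mk.injEq]
    constructor
    · rw [mul_inv_rev, cs.inv_simple]
      simp only [mul_assoc]
    · rw [add_assoc]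

lemma phi_one (t : W) : phi cs 1 t = 0 := by simp [phi, map_one]

lemma phi_mul (u v t : W) : phi cs (u * v) t = phi cs v t + phi cs u (v * t * v⁻¹) := by
  unfold phi
  rw [map_mul, Perm.mul_apply, PHI_apply cs v, PHI_apply cs u]
  simp only [zero_add]
  rfl

lemma phi_simple (i : B) (t : W) :
    phi cs (cs.simple i) t = if t = cs.simple i then 1 else 0 := by
  unfold phi
  rw [PHI_simple, eta_apply', zero_add]

lemma phi_inv (u t : W) : phi cs u⁻¹ t = phi cs u (u⁻¹ * t * u) := by
  have h := phi_mul cs u u⁻¹ t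
  rw [mul_inv_cancel, phi_one, inv_inv] at h
  have h2 : phi cs u⁻¹ t = - phi cs u (u⁻¹ * t * u) :=
    neg_eq_of_add_eq_zero_left h.symm |>.symm
  rw [h2, CharTwo.neg_eq]

lemma phi_eq_zero_of_not_mem_ris (ω : List B) (t : W) (ht : t ∉ cs.rightInvSeq ω) :
    phi cs (cs.wordProd ω) t = 0 := by
  induction ω with
  | nil => simpa [cs.wordProd_nil] using phi_one cs t
  | cons k ω ih =>
    have hris : cs.rightInvSeq (k :: ω)
        = ((cs.wordProd ω)⁻¹ * cs.simple k * cs.wordProd ω) :: cs.rightInvSeq ω := rfl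
    rw [hris, List.mem_cons, not_or] at ht
    obtain ⟨ht1, ht2⟩ := ht
    rw [cs.wordProd_cons, phi_mul cs (cs.simple k) (cs.wordProd ω) t, ih ht2, zero_add,
      phi_simple]
    rw [if_neg]
    intro h
    apply ht1
    rw [← h]
    group

lemma phi_eq_one_of_descent (v : W) (j : B) (hlt : cs.length (v * cs.simple j) < cs.length v) :
    phi cs v (cs.simple j) = 1 := by
  set v' := v * cs.simple j with hv'
  have hv : v = v' * cs.simple j := by
    rw [hv', cs.simple_mul_simple_cancel_right]
  have h0 : phi cs v' (cs.simple j) = 0 := by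
    obtain ⟨ω, hred, hw⟩ := cs.exists_reduced_word' v'
    by_contra hne
    have hmem : cs.simple j ∈ cs.rightInvSeq ω := by
      by_contra hmem
      exact hne (by rw [hw]; exact phi_eq_zero_of_not_mem_ris cs ω _ hmem)
    have hinv := cs.isRightInversion_of_mem_rightInvSeq hred hmem
    rw [← hw] at hinv
    have h2 := hinv.2
    rw [← hv] at h2
    omega
  rw [hv, phi_mul cs v' (cs.simple j) (cs.simple j), phi_simple cs j (cs.simple j), if_pos rfl]
  have harg : cs.simple j * cs.simple j * (cs.simple j)⁻¹ = cs.simple j := by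
    rw [cs.inv_simple, cs.simple_mul_simple_cancel_right]
  rw [harg, h0, add_zero]

lemma phi_theta (θ : W ≃* W) (hθS : ∀ i : B, ∃ j : B, θ (cs.simple i) = cs.simple j)
    (u : W) : ∀ t : W, phi cs (θ u) (θ t) = phi cs u t := by
  induction u using cs.simple_induction_left with
  | one => intro t; simp [phi_one]
  | mul_simple_left w i ih =>
    intro t
    obtain ⟨j, hj⟩ := hθS i
    rw [map_mul, hj, phi_mul cs (cs.simple j) (θ w) (θ t),
      phi_mul cs (cs.simple i) w t, ih t, phi_simple, phi_simple]
    congr 1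
    have : θ w * θ t * (θ w)⁻¹ = θ (w * t * w⁻¹) := by
      rw [map_mul, map_mul, map_inv]
    rw [this, ← hj]
    by_cases h : w * t * w⁻¹ = cs.simple i
    · rw [if_pos h, if_pos (by rw [h])]
    · rw [if_neg h, if_neg (fun hc => h (θ.injective hc))]

lemma no_fixed_descent (θ : W ≃* W) (hθS : ∀ i : B, ∃ j : B, θ (cs.simple i) = cs.simple j)
    (x : W) (i : B)
    (hlt : cs.length (cs.simple i * (x * θ x⁻¹)) < cs.length (x * θ x⁻¹))
    (hfix : cs.simple i * (x * θ x⁻¹) * θ (cs.simple i) = x * θ x⁻¹) : False := by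
  set w := x * θ x⁻¹ with hwdef
  set r := x⁻¹ * cs.simple i * x with hrdef
  have hwinv : w⁻¹ = θ x * x⁻¹ := by
    rw [hwdef, mul_inv_rev, map_inv, inv_inv]
  have hθs : θ (cs.simple i) = w⁻¹ * cs.simple i * w := by
    have h : θ (cs.simple i) = (cs.simple i * w)⁻¹ * (cs.simple i * w * θ (cs.simple i)) := by
      group
    rw [hfix] at h
    rw [h, mul_inv_rev, cs.inv_simple, mul_assoc]
  have hxw : w * θ x = x := by
    rw [hwdef, map_inv]; group
  have hxw' : (θ x)⁻¹ * w⁻¹ = x⁻¹ := by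
    rw [← mul_inv_rev, hxw]
  have hr : θ r = r := by
    rw [hrdef, map_mul, map_mul, map_inv, hθs]
    calc (θ x)⁻¹ * (w⁻¹ * cs.simple i * w) * θ x
        = ((θ x)⁻¹ * w⁻¹) * cs.simple i * (w * θ x) := by group
      _ = x⁻¹ * cs.simple i * x := by rw [hxw, hxw']
  have h1 : phi cs w⁻¹ (cs.simple i) = 1 := by
    apply phi_eq_one_of_descent
    have e1 : cs.length (w⁻¹ * cs.simple i) = cs.length (cs.simple i * w) := by
      rw [← cs.length_inv, mul_inv_rev, inv_inv, cs.inv_simple]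
    rw [e1, cs.length_inv]
    exact hlt
  have h2 : phi cs w⁻¹ (cs.simple i) = phi cs x r + phi cs x r := by
    rw [hwinv, phi_mul cs (θ x) x⁻¹ (cs.simple i), phi_inv cs x (cs.simple i), inv_inv,
      ← hrdef]
    have h3 : phi cs (θ x) r = phi cs x r := by
      conv_lhs => rw [← hr]
      exact phi_theta cs θ hθS x r
    rw [h3]
  rw [h2, CharTwo.add_self_eq_zero] at h1
  exact zero_ne_one h1

end TwistedAux

/-- The set of twisted identities `ι(θ) = {x·θ(x⁻¹) : x ∈ W}`. -/
def twistedIdentities {W : Type*} [Group W] (θ : W ≃* W) : Set W :=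
  {w : W | ∃ x : W, w = x * θ x⁻¹}

/-- If a twisted identity `w ∈ ι(θ)` satisfies `s·w·θ(s) = w` for all `s` in the
support `J(w)` of `w` (the letters of any reduced expression for `w`), then
`w = 1`. -/
theorem stmt_5 {B W : Type*} [Group W] {M : CoxeterMatrix B}
    (cs : CoxeterSystem M W) (θ : W ≃* W)
    (hθ2 : ∀ w : W, θ (θ w) = w)
    (hθS : ∀ i : B, ∃ j : B, θ (cs.simple i) = cs.simple j)
    (w : W) (hw : w ∈ twistedIdentities θ)
    (ω : List B) (hred : cs.IsReduced ω) (hprod : cs.wordProd ω = w)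
    (hcomm : ∀ i ∈ ω, cs.simple i * w * θ (cs.simple i) = w) :
    w = 1 := by
  obtain ⟨x, hx⟩ := hw
  cases ω with
  | nil => rw [← hprod, cs.wordProd_nil]
  | cons i ω' =>
    have h1 : cs.simple i * w = cs.wordProd ω' := by
      rw [← hprod, cs.wordProd_cons, cs.simple_mul_simple_cancel_left]
    have hred' : cs.length (cs.wordProd (i :: ω')) = (i :: ω').length := hred
    have h2 : cs.length w = ω'.length + 1 := by
      rw [← hprod, hred']
      simp
    have hlt : cs.length (cs.simple i * w) < cs.length w := by
      have h3 := cs.length_wordProd_le ω'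
      rw [h1]
      omega
    have hfix := hcomm i List.mem_cons_self
    rw [hx] at hlt hfix
    exact (TwistedAux.no_fixed_descent cs θ hθS x i hlt hfix).elim
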